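/- Let G be a 3-connected graph, and let (A,B) and (C,D) be two mixed 3-separations of G that cross so that two opposite corner-separators have size three. Then either all four links have the same size ℓ for some ℓ ∈ {0,1}, or else two adjacent links have size i and the other two links have size 3−i for some i ∈ {1,2}. -/
import Mathlib


namespace Paper

open SimpleGraph

variable {V : Type*} [Fintype V] [DecidableEq V]

/-- A graph is `k`-connected if it has more than `k` vertices and deleting
fewer than `k` vertices never disconnects it. -/
def KConnected {W : Type*} (k : ℕ) (H : SimpleGraph W) : Prop :=
  k < Nat.card W ∧ ∀ S : Set W, S.ncard < k → (H.induce Sᶜ).Connected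

/-- A mixed-separation of `G`: `A ∪ B = V(G)` and both `A \ B` and `B \ A` are nonempty. -/
def MixedSep (G : SimpleGraph V) (A B : Set V) : Prop :=
  A ∪ B = Set.univ ∧ (A \ B).Nonempty ∧ (B \ A).Nonempty

/-- The edges of the separator of `(A,B)`: the edges between `A \ B` and `B \ A`. -/
def sepEdges (G : SimpleGraph V) (A B : Set V) : Set (Sym2 V) :=
  {e | e ∈ G.edgeSet ∧ ∃ x ∈ A \ B, ∃ y ∈ B \ A, e = s(x, y)}

/-- The separator of `(A,B)`: the vertices of `A ∩ B` together with the
edges between `A \ B` and `B \ A`, viewed as a set in `V ⊕ Sym2 V`. -/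
def sepSet (G : SimpleGraph V) (A B : Set V) : Set (V ⊕ Sym2 V) :=
  (Sum.inl '' (A ∩ B)) ∪ (Sum.inr '' sepEdges G A B)

/-- The order of a mixed-separation: the size of its separator. -/
noncomputable def sepOrder (G : SimpleGraph V) (A B : Set V) : ℕ :=
  (sepSet G A B).ncard

/-- A mixed `k`-separation. -/
def MixedKSep (G : SimpleGraph V) (k : ℕ) (A B : Set V) : Prop :=
  MixedSep G A B ∧ sepOrder G A B = k

/-- A tri-separation: a mixed 3-separation such that every vertex of `A ∩ B`
has at least two neighbours in both `G[A]` and `G[B]`. -/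
def TriSep (G : SimpleGraph V) (A B : Set V) : Prop :=
  MixedKSep G 3 A B ∧
    ∀ v ∈ A ∩ B, 2 ≤ (G.neighborSet v ∩ A).ncard ∧ 2 ≤ (G.neighborSet v ∩ B).ncard

/-- Two mixed-separations are nested if, after possibly swapping the names of
the sides of either one, `A ⊆ C` and `B ⊇ D`. -/
def Nested (A B C D : Set V) : Prop :=
  (A ⊆ C ∧ D ⊆ B) ∨ (A ⊆ D ∧ C ⊆ B) ∨ (B ⊆ C ∧ D ⊆ A) ∨ (B ⊆ D ∧ C ⊆ A)

/-- The induced subgraph `G[A]` contains a cycle. -/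
def HasCycleIn (G : SimpleGraph V) (A : Set V) : Prop :=
  ∃ (u : V) (p : G.Walk u u), p.IsCycle ∧ ∀ x ∈ p.support, x ∈ A

/-- A mixed 3-separation is nontrivial if both sides induce a subgraph containing a cycle. -/
def NontrivialSep (G : SimpleGraph V) (A B : Set V) : Prop :=
  HasCycleIn G A ∧ HasCycleIn G B

/-- A mixed-separation is strong if every vertex in its separator has degree at least 4. -/
def StrongSep (G : SimpleGraph V) (A B : Set V) : Prop :=
  ∀ v ∈ A ∩ B, 4 ≤ (G.neighborSet v).ncard

/-- A tri-separation is totally nested if it is nested with every tri-separation of `G`. -/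
def TotallyNested (G : SimpleGraph V) (A B : Set V) : Prop :=
  ∀ C D : Set V, TriSep G C D → Nested A B C D

/-- A trivial tri-separation: its sides are the sides `{v}` and `V \ {v}` of an
atomic cut at a degree-3 vertex `v`. -/
def TrivialSep (G : SimpleGraph V) (A B : Set V) : Prop :=
  ∃ v : V, (G.neighborSet v).ncard = 3 ∧
    ((A = {v} ∧ B = {v}ᶜ) ∨ (B = {v} ∧ A = {v}ᶜ))

/-- Diagonal edges of the crossing-diagram of `(A,B)` and `(C,D)`:
edges whose endvertices lie in opposite corners. -/
def diagEdges (G : SimpleGraph V) (A B C D : Set V) : Set (Sym2 V) :=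
  {e | e ∈ G.edgeSet ∧ ∃ x y, e = s(x, y) ∧
    ((x ∈ (A \ B) ∩ (C \ D) ∧ y ∈ (B \ A) ∩ (D \ C)) ∨
     (x ∈ (A \ B) ∩ (D \ C) ∧ y ∈ (B \ A) ∩ (C \ D)))}

/-- The centre of the crossing-diagram: `A ∩ B ∩ C ∩ D` together with the diagonal edges. -/
def centre (G : SimpleGraph V) (A B C D : Set V) : Set (V ⊕ Sym2 V) :=
  (Sum.inl '' (A ∩ B ∩ C ∩ D)) ∪ (Sum.inr '' diagEdges G A B C D)

/-- The link for the side `C` in the crossing-diagram of `(A,B)` and `(C,D)`: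
the vertices `(A ∩ B) \ D` together with the non-diagonal edges of the separator
of `(A,B)` having an endvertex in a corner for `C`. -/
def link (G : SimpleGraph V) (A B C D : Set V) : Set (V ⊕ Sym2 V) :=
  (Sum.inl '' ((A ∩ B) \ D)) ∪
    (Sum.inr '' {e | e ∈ sepEdges G A B ∧ e ∉ diagEdges G A B C D ∧ ∃ x ∈ e, x ∈ C \ D})

/-- The corner-separator at the corner for `{A,C}`: the union of the links for `A`
and for `C` together with the centre, minus the diagonal edges without an
endvertex in the corner for `{A,C}`. -/
def cornerSep (G : SimpleGraph V) (A B C D : Set V) : Set (V ⊕ Sym2 V) :=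
  link G C D A B ∪ link G A B C D ∪ (Sum.inl '' (A ∩ B ∩ C ∩ D)) ∪
    (Sum.inr '' {e | e ∈ diagEdges G A B C D ∧ ∃ x ∈ e, x ∈ (A \ B) ∩ (C \ D)})

/-- Jumping edges: edges joining vertices of two opposite links. -/
def jumpEdges (G : SimpleGraph V) (A B C D : Set V) : Set (Sym2 V) :=
  {e | e ∈ G.edgeSet ∧ ∃ x y, e = s(x, y) ∧
    ((x ∈ (A ∩ B) \ D ∧ y ∈ (A ∩ B) \ C) ∨ (x ∈ (C ∩ D) \ B ∧ y ∈ (C ∩ D) \ A))}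

/-- A 2-separation: a separation of order two with no edges in its separator. -/
def TwoSep (G : SimpleGraph V) (A B : Set V) : Prop :=
  A ∪ B = Set.univ ∧ (A \ B).Nonempty ∧ (B \ A).Nonempty ∧
    (A ∩ B).ncard = 2 ∧ sepEdges G A B = ∅

/-- `K` is (the vertex set of) a connected component of `G - S`. -/
def IsCompOf (G : SimpleGraph V) (S K : Set V) : Prop :=
  ∃ c : (G.induce Sᶜ).ConnectedComponent, K = Subtype.val '' c.supp
/-! ### Auxiliary definitions and lemmas -/

/-- The edge part of a link. -/
def linkE (G : SimpleGraph V) (A B C D : Set V) : Set (Sym2 V) :=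
  {e | e ∈ sepEdges G A B ∧ e ∉ diagEdges G A B C D ∧ ∃ x ∈ e, x ∈ C \ D}

/-- Diagonal edges of the first type. -/
def diag1 (G : SimpleGraph V) (A B C D : Set V) : Set (Sym2 V) :=
  {e | e ∈ G.edgeSet ∧ ∃ x y, e = s(x, y) ∧
    x ∈ (A \ B) ∩ (C \ D) ∧ y ∈ (B \ A) ∩ (D \ C)}

lemma link_eq (G : SimpleGraph V) (A B C D : Set V) :
    link G A B C D = Sum.inl '' ((A ∩ B) \ D) ∪ Sum.inr '' linkE G A B C D := rfl

lemma sepEdges_comm (G : SimpleGraph V) (A B : Set V) :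
    sepEdges G B A = sepEdges G A B := by
  ext e
  constructor <;> rintro ⟨he, x, hx, y, hy, rfl⟩ <;>
    exact ⟨he, y, hy, x, hx, Sym2.eq_swap⟩

lemma diagEdges_swap34 (G : SimpleGraph V) (A B C D : Set V) :
    diagEdges G A B D C = diagEdges G A B C D := by
  ext e
  simp only [diagEdges, Set.mem_setOf_eq]
  constructor <;> rintro ⟨he, x, y, rfl, h⟩ <;> exact ⟨he, x, y, rfl, h.symm⟩

lemma diagEdges_swap12 (G : SimpleGraph V) (A B C D : Set V) :
    diagEdges G B A C D = diagEdges G A B C D := by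
  ext e
  simp only [diagEdges, Set.mem_setOf_eq]
  constructor <;> rintro ⟨he, x, y, rfl, (⟨hx, hy⟩ | ⟨hx, hy⟩)⟩
  · exact ⟨he, y, x, Sym2.eq_swap, Or.inr ⟨hy, hx⟩⟩
  · exact ⟨he, y, x, Sym2.eq_swap, Or.inl ⟨hy, hx⟩⟩
  · exact ⟨he, y, x, Sym2.eq_swap, Or.inr ⟨hy, hx⟩⟩
  · exact ⟨he, y, x, Sym2.eq_swap, Or.inl ⟨hy, hx⟩⟩

lemma diagEdges_rot (G : SimpleGraph V) (A B C D : Set V) :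
    diagEdges G C D A B = diagEdges G A B C D := by
  ext e
  simp only [diagEdges, Set.mem_setOf_eq]
  constructor <;> rintro ⟨he, x, y, rfl, (⟨hx, hy⟩ | ⟨hx, hy⟩)⟩
  · exact ⟨he, x, y, rfl, Or.inl ⟨⟨hx.2, hx.1⟩, ⟨hy.2, hy.1⟩⟩⟩
  · exact ⟨he, y, x, Sym2.eq_swap, Or.inr ⟨⟨hy.2, hy.1⟩, ⟨hx.2, hx.1⟩⟩⟩
  · exact ⟨he, x, y, rfl, Or.inl ⟨⟨hx.2, hx.1⟩, ⟨hy.2, hy.1⟩⟩⟩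
  · exact ⟨he, y, x, Sym2.eq_swap, Or.inr ⟨⟨hy.2, hy.1⟩, ⟨hx.2, hx.1⟩⟩⟩

lemma diagEdges_v1 (G : SimpleGraph V) (A B C D : Set V) :
    diagEdges G C D B A = diagEdges G A B C D :=
  (diagEdges_swap34 G C D A B).trans (diagEdges_rot G A B C D)

lemma diagEdges_v2 (G : SimpleGraph V) (A B C D : Set V) :
    diagEdges G B A D C = diagEdges G A B C D :=
  (diagEdges_swap12 G A B D C).trans (diagEdges_swap34 G A B C D)

lemma linkE_comm_left (G : SimpleGraph V) (A B C D : Set V) :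
    linkE G B A C D = linkE G A B C D := by
  unfold linkE
  rw [sepEdges_comm, diagEdges_swap12]

lemma link_comm_left (G : SimpleGraph V) (A B C D : Set V) :
    link G B A C D = link G A B C D := by
  rw [link_eq, link_eq, linkE_comm_left, Set.inter_comm B A]

lemma diag1_swap (G : SimpleGraph V) (A B C D : Set V) :
    diag1 G B A D C = diag1 G A B C D := by
  ext e
  simp only [diag1, Set.mem_setOf_eq]
  constructor <;> rintro ⟨he, x, y, rfl, hx, hy⟩ <;>
    exact ⟨he, y, x, Sym2.eq_swap, hy, hx⟩

lemma diag1_sub_diag (G : SimpleGraph V) (A B C D : Set V) :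
    diag1 G A B C D ⊆ diagEdges G A B C D :=
  fun _ h => h.elim fun hge h => h.elim fun x h => h.elim fun y ⟨hxy, hx, hy⟩ =>
    ⟨hge, x, y, hxy, Or.inl ⟨hx, hy⟩⟩

lemma diag1_sub_sepAB (G : SimpleGraph V) (A B C D : Set V) :
    diag1 G A B C D ⊆ sepEdges G A B := by
  rintro e ⟨hge, x, y, rfl, hx, hy⟩
  exact ⟨hge, x, hx.1, y, hy.1, rfl⟩

lemma diag1_sub_sepCD (G : SimpleGraph V) (A B C D : Set V) :
    diag1 G A B C D ⊆ sepEdges G C D := by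
  rintro e ⟨hge, x, y, rfl, hx, hy⟩
  exact ⟨hge, x, hx.2, y, hy.2, rfl⟩

/-- An edge of a link for `C` has no endvertex in `D \ C`. -/
lemma linkE_no (G : SimpleGraph V) (A B C D : Set V) {e : Sym2 V}
    (he : e ∈ linkE G A B C D) : ∀ w ∈ e, w ∉ D \ C := by
  obtain ⟨⟨hge, x, hx, y, hy, rfl⟩, hnd, u, hu, huC⟩ := he
  intro w hw hwD
  rw [Sym2.mem_iff] at hu hw
  rcases hu with rfl | rfl <;> rcases hw with rfl | rfl
  · exact huC.2 hwD.1
  · exact hnd ⟨hge, u, w, rfl, Or.inl ⟨⟨hx, huC⟩, ⟨hy, hwD⟩⟩⟩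
  · exact hnd ⟨hge, w, u, rfl, Or.inr ⟨⟨hx, hwD⟩, ⟨hy, huC⟩⟩⟩
  · exact huC.2 hwD.1

/-- An edge in both separators is diagonal. -/
lemma sep_both_diag (G : SimpleGraph V) (A B C D : Set V) {e : Sym2 V}
    (h1 : e ∈ sepEdges G A B) (h2 : e ∈ sepEdges G C D) :
    e ∈ diagEdges G A B C D := by
  obtain ⟨hge, x, hx, y, hy, rfl⟩ := h1
  obtain ⟨-, u, hu, v, hv, huv⟩ := h2
  rw [Sym2.eq_iff] at huv
  rcases huv with ⟨rfl, rfl⟩ | ⟨rfl, rfl⟩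
  · exact ⟨hge, x, y, rfl, Or.inl ⟨⟨hx, hu⟩, ⟨hy, hv⟩⟩⟩
  · exact ⟨hge, x, y, rfl, Or.inr ⟨⟨hx, hv⟩, ⟨hy, hu⟩⟩⟩

lemma ncard_inl_inr (s : Set V) (t : Set (Sym2 V)) :
    ((Sum.inl '' s ∪ Sum.inr '' t : Set (V ⊕ Sym2 V))).ncard = s.ncard + t.ncard := by
  have hdis : Disjoint (Sum.inl '' s : Set (V ⊕ Sym2 V)) (Sum.inr '' t) := by
    rw [Set.disjoint_left]
    rintro _ ⟨x, -, rfl⟩ ⟨y, -, hy⟩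
    simp at hy
  rw [Set.ncard_union_eq hdis (Set.toFinite _) (Set.toFinite _),
    Set.ncard_image_of_injective _ Sum.inl_injective,
    Set.ncard_image_of_injective _ Sum.inr_injective]

lemma sepSet_comm (G : SimpleGraph V) (A B : Set V) : sepSet G B A = sepSet G A B := by
  unfold sepSet
  rw [sepEdges_comm, Set.inter_comm B A]

lemma mixedKSep_comm {G : SimpleGraph V} {A B : Set V} (h : MixedKSep G 3 A B) :
    MixedKSep G 3 B A :=
  ⟨⟨by rw [Set.union_comm]; exact h.1.1, h.1.2.2, h.1.2.1⟩,
    by unfold sepOrder; rw [sepSet_comm]; exact h.2⟩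

/-- Exclusion lemma: if the links for `A` (of `(C,D)`) and for `D` (of `(A,B)`)
are empty, the centre has at most two vertices, and there are no residual
separator edges, then `(A,B)` and `(C,D)` are nested. -/
lemma excl (G : SimpleGraph V) (h3 : KConnected 3 G) (A B C D : Set V)
    (hABu : A ∪ B = Set.univ) (hCDu : C ∪ D = Set.univ)
    (hBne : (B \ A).Nonempty)
    (hq1 : (C ∩ D) \ B = ∅) (hp2 : (A ∩ B) \ C = ∅)
    (hEA : linkE G C D A B = ∅) (hED : linkE G A B D C = ∅)
    (hsAB : sepEdges G A B ⊆ linkE G A B C D ∪ linkE G A B D C ∪ diag1 G A B C D)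
    (hsCD : sepEdges G C D ⊆ linkE G C D A B ∪ linkE G C D B A ∪ diag1 G A B C D)
    (hz : (A ∩ B ∩ C ∩ D).ncard ≤ 2) :
    A ⊆ C ∧ D ⊆ B := by
  have hABu' : ∀ x, x ∈ A ∨ x ∈ B := fun x => by
    have : x ∈ A ∪ B := hABu ▸ Set.mem_univ x
    exact this
  have hCDu' : ∀ x, x ∈ C ∨ x ∈ D := fun x => by
    have : x ∈ C ∪ D := hCDu ▸ Set.mem_univ x
    exact this
  -- every neighbour of a vertex of the corner for {A,D} lies in the corner or centre
  have nbr : ∀ x y, x ∈ (A \ B) ∩ (D \ C) → G.Adj x y →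
      y ∈ (A \ B) ∩ (D \ C) ∨ y ∈ A ∩ B ∩ C ∩ D := by
    rintro x y ⟨⟨hxA, hxB⟩, hxD, hxC⟩ hadj
    have he : s(x, y) ∈ G.edgeSet := hadj
    by_cases hyA : y ∈ A
    · by_cases hyD : y ∈ D
      · by_cases hyC : y ∈ C
        · by_cases hyB : y ∈ B
          · exact Or.inr ⟨⟨⟨hyA, hyB⟩, hyC⟩, hyD⟩
          · exfalso
            have hmem : y ∈ (C ∩ D) \ B := ⟨⟨hyC, hyD⟩, hyB⟩
            rw [hq1] at hmem
            exact hmem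
        · by_cases hyB : y ∈ B
          · exfalso
            have hmem : y ∈ (A ∩ B) \ C := ⟨⟨hyA, hyB⟩, hyC⟩
            rw [hp2] at hmem
            exact hmem
          · exact Or.inl ⟨⟨hyA, hyB⟩, hyD, hyC⟩
      · have hyC : y ∈ C := (hCDu' y).resolve_right hyD
        exfalso
        have hsep : s(x, y) ∈ sepEdges G C D :=
          ⟨he, y, ⟨hyC, hyD⟩, x, ⟨hxD, hxC⟩, Sym2.eq_swap⟩
        rcases hsCD hsep with (h | h) | h
        · rw [hEA] at h; exact h
        · exact linkE_no G C D B A h x (Sym2.mem_mk_left x y) ⟨hxA, hxB⟩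
        · obtain ⟨-, u, v, huv, hu, hv⟩ := h
          rw [Sym2.eq_iff] at huv
          rcases huv with ⟨rfl, rfl⟩ | ⟨rfl, rfl⟩
          · exact hxC hu.2.1
          · exact hxB hv.1.1
    · have hyB : y ∈ B := (hABu' y).resolve_left hyA
      exfalso
      have hsep : s(x, y) ∈ sepEdges G A B := ⟨he, x, ⟨hxA, hxB⟩, y, ⟨hyB, hyA⟩, rfl⟩
      rcases hsAB hsep with (h | h) | h
      · exact linkE_no G A B C D h x (Sym2.mem_mk_left x y) ⟨hxD, hxC⟩
      · rw [hED] at h; exact h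
      · obtain ⟨-, u, v, huv, hu, hv⟩ := h
        rw [Sym2.eq_iff] at huv
        rcases huv with ⟨rfl, rfl⟩ | ⟨rfl, rfl⟩
        · exact hxC hu.2.1
        · exact hxB hv.1.1
  -- the corner for {A,D} is empty
  have hK : (A \ B) ∩ (D \ C) = ∅ := by
    by_contra hne
    obtain ⟨x0, hx0⟩ := Set.nonempty_iff_ne_empty.mpr hne
    obtain ⟨y0, hy0⟩ := hBne
    have hconn := h3.2 (A ∩ B ∩ C ∩ D) (lt_of_le_of_lt hz (by norm_num))
    have hx0S : x0 ∈ (A ∩ B ∩ C ∩ D)ᶜ := fun h => hx0.1.2 h.1.1.2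
    have hy0S : y0 ∈ (A ∩ B ∩ C ∩ D)ᶜ := fun h => hy0.2 h.1.1.1
    obtain ⟨p⟩ := hconn.preconnected ⟨x0, hx0S⟩ ⟨y0, hy0S⟩
    obtain ⟨d, -, hd1, hd2⟩ := p.exists_boundary_dart
      {u : ((A ∩ B ∩ C ∩ D)ᶜ : Set V) | u.1 ∈ (A \ B) ∩ (D \ C)}
      hx0 (fun h => hy0.2 h.1.1)
    have hadj : G.Adj d.toProd.1.1 d.toProd.2.1 := d.adj
    rcases nbr _ _ hd1 hadj with h | h
    · exact hd2 h
    · exact d.toProd.2.2 h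
  constructor
  · intro x hxA
    by_contra hxC
    have hxD : x ∈ D := (hCDu' x).resolve_left hxC
    by_cases hxB : x ∈ B
    · have hmem : x ∈ (A ∩ B) \ C := ⟨⟨hxA, hxB⟩, hxC⟩
      rw [hp2] at hmem
      exact hmem
    · have hmem : x ∈ (A \ B) ∩ (D \ C) := ⟨⟨hxA, hxB⟩, hxD, hxC⟩
      rw [hK] at hmem
      exact hmem
  · intro x hxD
    by_contra hxB
    have hxA : x ∈ A := (hABu' x).resolve_right hxB
    by_cases hxC : x ∈ C
    · have hmem : x ∈ (C ∩ D) \ B := ⟨⟨hxC, hxD⟩, hxB⟩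
      rw [hq1] at hmem
      exact hmem
    · have hmem : x ∈ (A \ B) ∩ (D \ C) := ⟨⟨hxA, hxB⟩, hxD, hxC⟩
      rw [hK] at hmem
      exact hmem

set_option maxHeartbeats 1000000 in
lemma key (G : SimpleGraph V) (h3 : KConnected 3 G) (A B C D : Set V)
    (hAB : MixedKSep G 3 A B) (hCD : MixedKSep G 3 C D)
    (hcross : ¬ Nested A B C D)
    (h1 : (cornerSep G A B C D).ncard = 3) (h2 : (cornerSep G B A D C).ncard = 3) :
    (∃ ℓ ∈ ({0, 1} : Set ℕ),
        (link G C D A B).ncard = ℓ ∧ (link G C D B A).ncard = ℓ ∧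
        (link G A B C D).ncard = ℓ ∧ (link G A B D C).ncard = ℓ) ∨
      (∃ i ∈ ({1, 2} : Set ℕ),
        (link G C D A B).ncard = i ∧ (link G A B D C).ncard = i ∧
        (link G C D B A).ncard = 3 - i ∧ (link G A B C D).ncard = 3 - i) := by
  obtain ⟨⟨hABu, hABx, hABy⟩, hABord⟩ := hAB
  obtain ⟨⟨hCDu, hCDx, hCDy⟩, hCDord⟩ := hCD
  have hABu' : ∀ x, x ∈ A ∨ x ∈ B := fun x => by
    have : x ∈ A ∪ B := hABu ▸ Set.mem_univ x
    exact this
  have hCDu' : ∀ x, x ∈ C ∨ x ∈ D := fun x => by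
    have : x ∈ C ∪ D := hCDu ▸ Set.mem_univ x
    exact this
  -- link cardinalities
  have hlC : (link G A B C D).ncard = ((A ∩ B) \ D).ncard + (linkE G A B C D).ncard :=
    ncard_inl_inr _ _
  have hlD : (link G A B D C).ncard = ((A ∩ B) \ C).ncard + (linkE G A B D C).ncard :=
    ncard_inl_inr _ _
  have hlA : (link G C D A B).ncard = ((C ∩ D) \ B).ncard + (linkE G C D A B).ncard :=
    ncard_inl_inr _ _
  have hlB : (link G C D B A).ncard = ((C ∩ D) \ A).ncard + (linkE G C D B A).ncard :=
    ncard_inl_inr _ _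
  -- separator orders
  have hsAB : sepOrder G A B = (A ∩ B).ncard + (sepEdges G A B).ncard := ncard_inl_inr _ _
  have hsCD : sepOrder G C D = (C ∩ D).ncard + (sepEdges G C D).ncard := ncard_inl_inr _ _
  -- vertex partitions
  have dABv1 : Disjoint ((A ∩ B) \ D) ((A ∩ B) \ C) := by
    rw [Set.disjoint_left]
    rintro x ⟨-, hD⟩ ⟨-, hC⟩
    rcases hCDu' x with h | h
    exacts [hC h, hD h]
  have dABv2 : Disjoint ((A ∩ B) \ D ∪ (A ∩ B) \ C) (A ∩ B ∩ C ∩ D) := by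
    rw [Set.disjoint_left]
    rintro x (⟨-, hD⟩ | ⟨-, hC⟩) hz
    exacts [hD hz.2, hC hz.1.2]
  have hvAB : (A ∩ B).ncard =
      ((A ∩ B) \ D).ncard + ((A ∩ B) \ C).ncard + (A ∩ B ∩ C ∩ D).ncard := by
    have e1 : A ∩ B = ((A ∩ B) \ D ∪ (A ∩ B) \ C) ∪ (A ∩ B ∩ C ∩ D) := by
      ext x
      have := hCDu' x
      simp only [Set.mem_union, Set.mem_diff, Set.mem_inter_iff]
      tauto
    conv_lhs => rw [e1]
    rw [Set.ncard_union_eq dABv2 (Set.toFinite _) (Set.toFinite _),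
      Set.ncard_union_eq dABv1 (Set.toFinite _) (Set.toFinite _)]
  have dCDv1 : Disjoint ((C ∩ D) \ B) ((C ∩ D) \ A) := by
    rw [Set.disjoint_left]
    rintro x ⟨-, hB⟩ ⟨-, hA⟩
    rcases hABu' x with h | h
    exacts [hA h, hB h]
  have dCDv2 : Disjoint ((C ∩ D) \ B ∪ (C ∩ D) \ A) (A ∩ B ∩ C ∩ D) := by
    rw [Set.disjoint_left]
    rintro x (⟨-, hB⟩ | ⟨-, hA⟩) hz
    exacts [hB hz.1.1.2, hA hz.1.1.1]
  have hvCD : (C ∩ D).ncard =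
      ((C ∩ D) \ B).ncard + ((C ∩ D) \ A).ncard + (A ∩ B ∩ C ∩ D).ncard := by
    have e1 : C ∩ D = ((C ∩ D) \ B ∪ (C ∩ D) \ A) ∪ (A ∩ B ∩ C ∩ D) := by
      ext x
      have := hABu' x
      simp only [Set.mem_union, Set.mem_diff, Set.mem_inter_iff]
      tauto
    conv_lhs => rw [e1]
    rw [Set.ncard_union_eq dCDv2 (Set.toFinite _) (Set.toFinite _),
      Set.ncard_union_eq dCDv1 (Set.toFinite _) (Set.toFinite _)]
  -- edge disjointness
  have dCD' : Disjoint (linkE G A B C D) (linkE G A B D C) := by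
    rw [Set.disjoint_left]
    rintro e h1' ⟨-, -, u, hu, hu'⟩
    exact linkE_no G A B C D h1' u hu hu'
  have dAB' : Disjoint (linkE G C D A B) (linkE G C D B A) := by
    rw [Set.disjoint_left]
    rintro e h1' ⟨-, -, u, hu, hu'⟩
    exact linkE_no G C D A B h1' u hu hu'
  have dCg : Disjoint (linkE G A B C D) (diag1 G A B C D) := by
    rw [Set.disjoint_left]
    rintro e ⟨-, hnd, -⟩ hg
    exact hnd (diag1_sub_diag G A B C D hg)
  have dDg : Disjoint (linkE G A B D C) (diag1 G A B C D) := by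
    rw [Set.disjoint_left]
    rintro e ⟨-, hnd, -⟩ hg
    exact hnd (by rw [diagEdges_swap34]; exact diag1_sub_diag G A B C D hg)
  have dAg : Disjoint (linkE G C D A B) (diag1 G A B C D) := by
    rw [Set.disjoint_left]
    rintro e ⟨-, hnd, -⟩ hg
    exact hnd (by rw [diagEdges_rot]; exact diag1_sub_diag G A B C D hg)
  have dBg : Disjoint (linkE G C D B A) (diag1 G A B C D) := by
    rw [Set.disjoint_left]
    rintro e ⟨-, hnd, -⟩ hg
    exact hnd (by rw [diagEdges_v1]; exact diag1_sub_diag G A B C D hg)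
  have dAC : Disjoint (linkE G C D A B) (linkE G A B C D) := by
    rw [Set.disjoint_left]
    rintro e hA' hC'
    exact hC'.2.1 (sep_both_diag G A B C D hC'.1 hA'.1)
  have dBD : Disjoint (linkE G C D B A) (linkE G A B D C) := by
    rw [Set.disjoint_left]
    rintro e hB' hD'
    exact hD'.2.1 (by rw [diagEdges_swap34]; exact sep_both_diag G A B C D hD'.1 hB'.1)
  -- edge partitions
  have hsubAB : linkE G A B C D ∪ linkE G A B D C ∪ diag1 G A B C D ⊆ sepEdges G A B :=
    Set.union_subset (Set.union_subset (fun e h => h.1) (fun e h => h.1))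
      (diag1_sub_sepAB G A B C D)
  have heAB : (sepEdges G A B).ncard =
      (linkE G A B C D).ncard + (linkE G A B D C).ncard + (diag1 G A B C D).ncard +
        (sepEdges G A B \ (linkE G A B C D ∪ linkE G A B D C ∪ diag1 G A B C D)).ncard := by
    conv_lhs => rw [← Set.union_diff_cancel hsubAB]
    rw [Set.ncard_union_eq Set.disjoint_sdiff_right (Set.toFinite _) (Set.toFinite _),
      Set.ncard_union_eq (Disjoint.union_left dCg dDg) (Set.toFinite _) (Set.toFinite _),
      Set.ncard_union_eq dCD' (Set.toFinite _) (Set.toFinite _)]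
  have hsubCD : linkE G C D A B ∪ linkE G C D B A ∪ diag1 G A B C D ⊆ sepEdges G C D :=
    Set.union_subset (Set.union_subset (fun e h => h.1) (fun e h => h.1))
      (diag1_sub_sepCD G A B C D)
  have heCD : (sepEdges G C D).ncard =
      (linkE G C D A B).ncard + (linkE G C D B A).ncard + (diag1 G A B C D).ncard +
        (sepEdges G C D \ (linkE G C D A B ∪ linkE G C D B A ∪ diag1 G A B C D)).ncard := by
    conv_lhs => rw [← Set.union_diff_cancel hsubCD]
    rw [Set.ncard_union_eq Set.disjoint_sdiff_right (Set.toFinite _) (Set.toFinite _),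
      Set.ncard_union_eq (Disjoint.union_left dAg dBg) (Set.toFinite _) (Set.toFinite _),
      Set.ncard_union_eq dAB' (Set.toFinite _) (Set.toFinite _)]
  -- corner separator decompositions
  have hS5 : {e | e ∈ diagEdges G A B C D ∧ ∃ x ∈ e, x ∈ (A \ B) ∩ (C \ D)} =
      diag1 G A B C D := by
    ext e
    constructor
    · rintro ⟨⟨hge, x, y, rfl, (⟨hx, hy⟩ | ⟨hx, hy⟩)⟩, u, hu, hu'⟩
      · exact ⟨hge, x, y, rfl, hx, hy⟩
      · rw [Sym2.mem_iff] at hu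
        rcases hu with rfl | rfl
        · exact absurd hx.2.1 hu'.2.2
        · exact absurd hu'.1.1 hy.1.2
    · rintro ⟨hge, x, y, rfl, hx, hy⟩
      exact ⟨⟨hge, x, y, rfl, Or.inl ⟨hx, hy⟩⟩, x, Sym2.mem_mk_left x y, hx⟩
  have hS6 : {e | e ∈ diagEdges G B A D C ∧ ∃ x ∈ e, x ∈ (B \ A) ∩ (D \ C)} =
      diag1 G A B C D := by
    rw [diagEdges_v2]
    ext e
    constructor
    · rintro ⟨⟨hge, x, y, rfl, (⟨hx, hy⟩ | ⟨hx, hy⟩)⟩, u, hu, hu'⟩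
      · exact ⟨hge, x, y, rfl, hx, hy⟩
      · rw [Sym2.mem_iff] at hu
        rcases hu with rfl | rfl
        · exact absurd hu'.1.1 hx.1.2
        · exact absurd hy.2.1 hu'.2.2
    · rintro ⟨hge, x, y, rfl, hx, hy⟩
      exact ⟨⟨hge, x, y, rfl, Or.inl ⟨hx, hy⟩⟩, y, Sym2.mem_mk_right x y, hy⟩
  have e0 : cornerSep G A B C D =
      (Sum.inl '' ((C ∩ D) \ B) ∪ Sum.inr '' linkE G C D A B) ∪
        (Sum.inl '' ((A ∩ B) \ D) ∪ Sum.inr '' linkE G A B C D) ∪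
        Sum.inl '' (A ∩ B ∩ C ∩ D) ∪ Sum.inr '' diag1 G A B C D := by
    rw [← hS5]; rfl
  have ecs : cornerSep G A B C D =
      Sum.inl '' ((C ∩ D) \ B ∪ (A ∩ B) \ D ∪ A ∩ B ∩ C ∩ D) ∪
        Sum.inr '' (linkE G C D A B ∪ linkE G A B C D ∪ diag1 G A B C D) := by
    rw [e0]
    simp only [Set.image_union]
    ext u
    simp only [Set.mem_union]
    tauto
  have dQP : Disjoint ((C ∩ D) \ B) ((A ∩ B) \ D) := by
    rw [Set.disjoint_left]
    rintro x ⟨-, hB⟩ ⟨⟨-, hB'⟩, -⟩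
    exact hB hB'
  have dQPZ : Disjoint ((C ∩ D) \ B ∪ (A ∩ B) \ D) (A ∩ B ∩ C ∩ D) := by
    rw [Set.disjoint_left]
    rintro x (⟨-, hB⟩ | ⟨-, hD⟩) hz
    exacts [hB hz.1.1.2, hD hz.2]
  have hc1 : (cornerSep G A B C D).ncard =
      ((C ∩ D) \ B).ncard + ((A ∩ B) \ D).ncard + (A ∩ B ∩ C ∩ D).ncard +
        ((linkE G C D A B).ncard + (linkE G A B C D).ncard + (diag1 G A B C D).ncard) := by
    rw [ecs, ncard_inl_inr,
      Set.ncard_union_eq dQPZ (Set.toFinite _) (Set.toFinite _),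
      Set.ncard_union_eq dQP (Set.toFinite _) (Set.toFinite _),
      Set.ncard_union_eq (Disjoint.union_left dAg dCg) (Set.toFinite _) (Set.toFinite _),
      Set.ncard_union_eq dAC (Set.toFinite _) (Set.toFinite _)]
  have e0' : cornerSep G B A D C =
      (Sum.inl '' ((C ∩ D) \ A) ∪ Sum.inr '' linkE G C D B A) ∪
        (Sum.inl '' ((A ∩ B) \ C) ∪ Sum.inr '' linkE G A B D C) ∪
        Sum.inl '' (B ∩ A ∩ D ∩ C) ∪ Sum.inr '' diag1 G A B C D := by
    show link G D C B A ∪ link G B A D C ∪ Sum.inl '' (B ∩ A ∩ D ∩ C) ∪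
        Sum.inr '' {e | e ∈ diagEdges G B A D C ∧ ∃ x ∈ e, x ∈ (B \ A) ∩ (D \ C)} = _
    rw [hS6, link_comm_left G C D B A, link_comm_left G A B D C, link_eq, link_eq]
  have hzz : B ∩ A ∩ D ∩ C = A ∩ B ∩ C ∩ D := by
    ext x
    simp only [Set.mem_inter_iff]
    tauto
  have ecs' : cornerSep G B A D C =
      Sum.inl '' ((C ∩ D) \ A ∪ (A ∩ B) \ C ∪ A ∩ B ∩ C ∩ D) ∪
        Sum.inr '' (linkE G C D B A ∪ linkE G A B D C ∪ diag1 G A B C D) := by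
    rw [e0', hzz]
    simp only [Set.image_union]
    ext u
    simp only [Set.mem_union]
    tauto
  have dQP' : Disjoint ((C ∩ D) \ A) ((A ∩ B) \ C) := by
    rw [Set.disjoint_left]
    rintro x ⟨-, hA⟩ ⟨⟨hA', -⟩, -⟩
    exact hA hA'
  have dQPZ' : Disjoint ((C ∩ D) \ A ∪ (A ∩ B) \ C) (A ∩ B ∩ C ∩ D) := by
    rw [Set.disjoint_left]
    rintro x (⟨-, hA⟩ | ⟨-, hC⟩) hz
    exacts [hA hz.1.1.1, hC hz.1.2]
  have hc2 : (cornerSep G B A D C).ncard =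
      ((C ∩ D) \ A).ncard + ((A ∩ B) \ C).ncard + (A ∩ B ∩ C ∩ D).ncard +
        ((linkE G C D B A).ncard + (linkE G A B D C).ncard + (diag1 G A B C D).ncard) := by
    rw [ecs', ncard_inl_inr,
      Set.ncard_union_eq dQPZ' (Set.toFinite _) (Set.toFinite _),
      Set.ncard_union_eq dQP' (Set.toFinite _) (Set.toFinite _),
      Set.ncard_union_eq (Disjoint.union_left dBg dDg) (Set.toFinite _) (Set.toFinite _),
      Set.ncard_union_eq dBD (Set.toFinite _) (Set.toFinite _)]
  -- arithmetic
  rw [hsAB, hvAB, heAB] at hABord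
  rw [hsCD, hvCD, heCD] at hCDord
  rw [hc1] at h1
  rw [hc2] at h2
  have hr1 : (sepEdges G A B \ (linkE G A B C D ∪ linkE G A B D C ∪ diag1 G A B C D)).ncard
      = 0 := by omega
  have hr2 : (sepEdges G C D \ (linkE G C D A B ∪ linkE G C D B A ∪ diag1 G A B C D)).ncard
      = 0 := by omega
  have hsub1 : sepEdges G A B ⊆ linkE G A B C D ∪ linkE G A B D C ∪ diag1 G A B C D :=
    Set.diff_eq_empty.mp ((Set.ncard_eq_zero (Set.toFinite _)).mp hr1)
  have hsub2 : sepEdges G C D ⊆ linkE G C D A B ∪ linkE G C D B A ∪ diag1 G A B C D :=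
    Set.diff_eq_empty.mp ((Set.ncard_eq_zero (Set.toFinite _)).mp hr2)
  by_cases hab : (link G C D A B).ncard = (link G C D B A).ncard
  · -- all links equal
    refine Or.inl ⟨(link G C D A B).ncard, ?_, rfl, hab.symm, by omega, by omega⟩
    have : (link G C D A B).ncard = 0 ∨ (link G C D A B).ncard = 1 := by omega
    rcases this with h | h <;> rw [h] <;> simp
  · -- two adjacent links of size i, the others of size 3 - i
    have ha0 : (link G C D A B).ncard ≠ 0 := by
      intro ha
      have hq1 : (C ∩ D) \ B = ∅ := (Set.ncard_eq_zero (Set.toFinite _)).mp (by omega)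
      have hp2 : (A ∩ B) \ C = ∅ := (Set.ncard_eq_zero (Set.toFinite _)).mp (by omega)
      have hEA : linkE G C D A B = ∅ := (Set.ncard_eq_zero (Set.toFinite _)).mp (by omega)
      have hED : linkE G A B D C = ∅ := (Set.ncard_eq_zero (Set.toFinite _)).mp (by omega)
      have hzle : (A ∩ B ∩ C ∩ D).ncard ≤ 2 := by omega
      exact hcross (Or.inl (excl G h3 A B C D hABu hCDu hABy hq1 hp2 hEA hED hsub1
        hsub2 hzle))
    have hb0 : (link G C D B A).ncard ≠ 0 := by
      intro hb
      have hq1' : (D ∩ C) \ A = ∅ := by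
        rw [Set.inter_comm]
        exact (Set.ncard_eq_zero (Set.toFinite _)).mp (by omega)
      have hp2' : (B ∩ A) \ D = ∅ := by
        rw [Set.inter_comm]
        exact (Set.ncard_eq_zero (Set.toFinite _)).mp (by omega)
      have hEB : linkE G D C B A = ∅ := by
        rw [linkE_comm_left G C D B A]
        exact (Set.ncard_eq_zero (Set.toFinite _)).mp (by omega)
      have hEC : linkE G B A C D = ∅ := by
        rw [linkE_comm_left G A B C D]
        exact (Set.ncard_eq_zero (Set.toFinite _)).mp (by omega)
      have hsub1' : sepEdges G B A ⊆ linkE G B A D C ∪ linkE G B A C D ∪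
          diag1 G B A D C := by
        rw [sepEdges_comm G A B, linkE_comm_left G A B D C, linkE_comm_left G A B C D,
          diag1_swap G A B C D]
        intro e he
        rcases hsub1 he with (h | h) | h
        exacts [Or.inl (Or.inr h), Or.inl (Or.inl h), Or.inr h]
      have hsub2' : sepEdges G D C ⊆ linkE G D C B A ∪ linkE G D C A B ∪
          diag1 G B A D C := by
        rw [sepEdges_comm G C D, linkE_comm_left G C D B A, linkE_comm_left G C D A B,
          diag1_swap G A B C D]
        intro e he
        rcases hsub2 he with (h | h) | h
        exacts [Or.inl (Or.inr h), Or.inl (Or.inl h), Or.inr h]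
      have hzle' : (B ∩ A ∩ D ∩ C).ncard ≤ 2 := by
        rw [hzz]
        omega
      have hBAu : B ∪ A = Set.univ := by rw [Set.union_comm]; exact hABu
      have hDCu : D ∪ C = Set.univ := by rw [Set.union_comm]; exact hCDu
      exact hcross (Or.inr (Or.inr (Or.inr (excl G h3 B A D C hBAu hDCu hABx hq1' hp2'
        hEB hEC hsub1' hsub2' hzle'))))
    refine Or.inr ⟨(link G C D A B).ncard, ?_, rfl, by omega, by omega, by omega⟩
    have : (link G C D A B).ncard = 1 ∨ (link G C D A B).ncard = 2 := by omega
    rcases this with h | h <;> rw [h] <;> simp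

/-- If two mixed 3-separations of a 3-connected graph cross so that
two opposite corner-separators have size three, then either all links have the
same size `ℓ ∈ {0,1}`, or two adjacent links have size `i` and the other two
size `3 - i` for some `i ∈ {1,2}`. -/
theorem stmt5 (G : SimpleGraph V) (h3 : KConnected 3 G) (A B C D : Set V)
    (hAB : MixedKSep G 3 A B) (hCD : MixedKSep G 3 C D)
    (hcross : ¬ Nested A B C D)
    (hopp : ((cornerSep G A B C D).ncard = 3 ∧ (cornerSep G B A D C).ncard = 3) ∨
      ((cornerSep G A B D C).ncard = 3 ∧ (cornerSep G B A C D).ncard = 3)) :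
    (∃ ℓ ∈ ({0, 1} : Set ℕ),
        (link G C D A B).ncard = ℓ ∧ (link G C D B A).ncard = ℓ ∧
        (link G A B C D).ncard = ℓ ∧ (link G A B D C).ncard = ℓ) ∨
      (∃ i ∈ ({1, 2} : Set ℕ),
        (((link G C D A B).ncard = i ∧ (link G A B C D).ncard = i ∧
            (link G C D B A).ncard = 3 - i ∧ (link G A B D C).ncard = 3 - i) ∨
          ((link G C D A B).ncard = i ∧ (link G A B D C).ncard = i ∧
            (link G C D B A).ncard = 3 - i ∧ (link G A B C D).ncard = 3 - i))) := by
  rcases hopp with ⟨h1, h2⟩ | ⟨h1, h2⟩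
  · rcases key G h3 A B C D hAB hCD hcross h1 h2 with
      ⟨ℓ, hm, ha, hb, hc, hd⟩ | ⟨i, hm, ha, hd, hb, hc⟩
    · exact Or.inl ⟨ℓ, hm, ha, hb, hc, hd⟩
    · exact Or.inr ⟨i, hm, Or.inr ⟨ha, hd, hb, hc⟩⟩
  · have hCD' := mixedKSep_comm hCD
    have hcross' : ¬ Nested A B D C := fun h => hcross (by unfold Nested at h ⊢; tauto)
    have eA : link G D C A B = link G C D A B := link_comm_left G C D A B
    have eB : link G D C B A = link G C D B A := link_comm_left G C D B A
    rcases key G h3 A B D C hAB hCD' hcross' h1 h2 with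
      ⟨ℓ, hm, ha, hb, hc, hd⟩ | ⟨i, hm, ha, hc, hb, hd⟩
    · rw [eA] at ha
      rw [eB] at hb
      exact Or.inl ⟨ℓ, hm, ha, hb, hd, hc⟩
    · rw [eA] at ha
      rw [eB] at hb
      exact Or.inr ⟨i, hm, Or.inl ⟨ha, hc, hb, hd⟩⟩

end Paper
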